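/- In any lexicographic mixed instance, every Pareto optimal complete allocation is sequencible. -/

import Mathlib

attribute [local instance 10] Classical.propDecidable

/-- A lexicographic mixed instance: each agent `i` has a set `G i` of goods
(its complement being the chores `C i`) and a strict linear importance order
`⊳_i` on the items, encoded as a linear order where larger means more important. -/
structure LexInstance (N M : Type) [Fintype N] [Fintype M] [DecidableEq M] where
  G : N → Finset M
  ord : N → LinearOrder M

namespace LexInstance

variable {N M : Type} [Fintype N] [Fintype M] [DecidableEq M]

/-- `inst.imp i a b` means `a ⊳_i b` : `a` is more important than `b` for agent `i`. -/
def imp (inst : LexInstance N M) (i : N) (a b : M) : Prop := (inst.ord i).lt b a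

/-- The chores of agent `i`. -/
def C (inst : LexInstance N M) (i : N) : Finset M := (inst.G i)ᶜ

/-- Strict lexicographic preference `X ≻_i Y`. -/
def SPref (inst : LexInstance N M) (i : N) (X Y : Finset M) : Prop :=
  (∃ g ∈ inst.G i ∩ (X \ Y), ∀ o ∈ Y ∩ inst.G i, inst.imp i o g → o ∈ X) ∨
  (∃ c ∈ inst.C i ∩ (Y \ X), ∀ o ∈ X ∩ inst.C i, inst.imp i o c → o ∈ Y)

/-- Weak lexicographic preference `X ⪰_i Y`. -/
def WPref (inst : LexInstance N M) (i : N) (X Y : Finset M) : Prop :=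
  inst.SPref i X Y ∨ X = Y

/-- A (complete) allocation: pairwise disjoint bundles whose union is all of `M`. -/
def IsAllocation (_inst : LexInstance N M) (A : N → Finset M) : Prop :=
  (∀ i j, i ≠ j → Disjoint (A i) (A j)) ∧ ∀ o : M, ∃ i, o ∈ A i

/-- Pareto optimality of a (complete) allocation. -/
def ParetoOptimal (inst : LexInstance N M) (A : N → Finset M) : Prop :=
  ¬ ∃ B : N → Finset M, inst.IsAllocation B ∧
      (∀ i, inst.WPref i (B i) (A i)) ∧ ∃ h, inst.SPref h (B h) (A h)

/-- The item agent `i` picks from the remaining set `R`: its `⊳_i`-greatest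
remaining good if there is one, and otherwise the `⊳_i`-least remaining item. -/
noncomputable def pickOne (inst : LexInstance N M) (i : N) (R : Finset M)
    (h : R.Nonempty) : M :=
  if hg : (R ∩ inst.G i).Nonempty then @Finset.max' M (inst.ord i) (R ∩ inst.G i) hg
  else @Finset.min' M (inst.ord i) R h

/-- Run the picking procedure along a sequence of agents, starting from the
remaining items `R`; returns the resulting bundles. -/
noncomputable def runPick (inst : LexInstance N M) : List N → Finset M → N → Finset M
  | [], _ => fun _ => ∅
  | i :: rest, R =>
    if h : R.Nonempty then
      fun j =>
        runPick inst rest (R.erase (inst.pickOne i R h)) j ∪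
          (if j = i then {inst.pickOne i R h} else ∅)
    else fun _ => ∅

/-- An allocation is sequencible if it is produced by some picking sequence of
length `|M|` starting from all items. -/
def Sequencible (inst : LexInstance N M) (A : N → Finset M) : Prop :=
  ∃ s : List N, s.length = Fintype.card M ∧ inst.runPick s Finset.univ = A

/-- A chores-only instance: every item is a chore for every agent. -/
def ChoresOnly (inst : LexInstance N M) : Prop := ∀ i, inst.G i = ∅

/-- Envy-freeness up to any item. -/
def EFX (inst : LexInstance N M) (A : N → Finset M) : Prop :=
  ∀ i h : N,
    (∀ o ∈ A h ∩ inst.G i, inst.WPref i (A i) ((A h).erase o)) ∧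
    (∀ o ∈ A i ∩ inst.C i, inst.WPref i ((A i).erase o) (A h))

/-- Envy-freeness up to any chore. -/
def EFXc (inst : LexInstance N M) (A : N → Finset M) : Prop :=
  ∀ i h : N, ∀ o ∈ A i ∩ inst.C i, inst.WPref i ((A i).erase o) (A h)

/-- Envy-freeness up to one item. -/
def EF1 (inst : LexInstance N M) (A : N → Finset M) : Prop :=
  ∀ i h : N, ((A i ∩ inst.C i) ∪ (A h ∩ inst.G i)).Nonempty →
    ∃ o ∈ (A i ∩ inst.C i) ∪ (A h ∩ inst.G i),
      inst.WPref i (A i) ((A h).erase o) ∨ inst.WPref i ((A i).erase o) (A h)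

/-- `A` gives every agent at least its maximin share: for every partition `P`
of the items into `n` bundles, agent `i` weakly prefers `A i` to some bundle of
`P` (hence to the `⪰_i`-least bundle of `P`). -/
def MMSfair (inst : LexInstance N M) (A : N → Finset M) : Prop :=
  ∀ i, ∀ P : N → Finset M, inst.IsAllocation P → ∃ j, inst.WPref i (A i) (P j)

/-- `B` is the maximin share `MMS_i` of agent `i`: `B` is the `⪰_i`-least bundle
of some partition of `M` into `n` bundles, and every such partition contains a
bundle to which `B` is weakly preferred. -/
def IsMMSBundle (inst : LexInstance N M) (i : N) (B : Finset M) : Prop :=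
  (∃ P : N → Finset M, inst.IsAllocation P ∧ (∃ j, P j = B) ∧
      ∀ j, inst.WPref i (P j) B) ∧
  (∀ P : N → Finset M, inst.IsAllocation P → ∃ j, inst.WPref i B (P j))

/-- The `k`-th (0-indexed) `⊳_i`-greatest good of agent `i`, if any. -/
noncomputable def kthGood (inst : LexInstance N M) (i : N) (k : ℕ) : Option M :=
  letI : LinearOrder M := inst.ord i
  (((inst.G i).sort (· ≤ ·)).reverse)[k]?

/-- The `k`-th (0-indexed) `⊳_i`-least chore of agent `i`, if any. -/
noncomputable def kthChore (inst : LexInstance N M) (i : N) (k : ℕ) : Option M :=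
  letI : LinearOrder M := inst.ord i
  ((inst.C i).sort  (· ≤ ·))[k]?

/-- Number of agents receiving their `k`-th (0-indexed) greatest good. -/
noncomputable def nPlus (inst : LexInstance N M) (A : N → Finset M) (k : ℕ) : ℕ :=
  (Finset.univ.filter fun i => (inst.kthGood i k).elim False (· ∈ A i)).card

/-- Number of agents receiving their `k`-th (0-indexed) least chore. -/
noncomputable def nMinus (inst : LexInstance N M) (A : N → Finset M) (k : ℕ) : ℕ :=
  (Finset.univ.filter fun i => (inst.kthChore i k).elim False (· ∈ A i)).card

/-- The rank signature `(n_1^+, …, n_m^+, n_1^-, …, n_m^-)` of an allocation. -/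
noncomputable def signature (inst : LexInstance N M) (A : N → Finset M) : List ℕ :=
  ((List.range (Fintype.card M)).map fun k => inst.nPlus A k) ++
    ((List.range (Fintype.card M)).map fun k => inst.nMinus A k)

/-- Rank-maximality: the signature is lexicographically maximal over allocations. -/
def RankMaximal (inst : LexInstance N M) (A : N → Finset M) : Prop :=
  inst.IsAllocation A ∧ ∀ B : N → Finset M, inst.IsAllocation B →
    ¬ List.Lex (· < ·) (inst.signature A) (inst.signature B)

end LexInstance

/-- The set of the `k` greatest (most important) elements of `S` under `L`. -/
def topK {M : Type} [DecidableEq M] (L : LinearOrder M) (S : Finset M) (k : ℕ) :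
    Finset M :=
  letI := L
  S.filter fun o => (S.filter fun o' => o < o').card < k

/-- Build a linear order on `Fin m` from an injective ranking function
(larger value = more important). -/
def mkOrd {m : ℕ} (f : Fin m → ℕ) (hf : Function.Injective f) : LinearOrder (Fin m) :=
  LinearOrder.lift' f hf


set_option linter.unusedSectionVars false

namespace LexInstance

variable {N M : Type} [Fintype N] [Fintype M] [DecidableEq M]

-- auxiliary lemmas
lemma wpref_refl (inst : LexInstance N M) (i : N) (X : Finset M) : inst.WPref i X X :=
  Or.inr rfl

lemma spref_insert_good (inst : LexInstance N M) {i : N} {g : M} {X : Finset M}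
    (hg : g ∈ inst.G i) (hgX : g ∉ X) : inst.SPref i (insert g X) X := by
  left
  refine ⟨g, ?_, fun o ho _ => Finset.mem_insert_of_mem (Finset.mem_inter.1 ho).1⟩
  simp [Finset.mem_inter, Finset.mem_sdiff, hg, hgX]

lemma spref_erase_chore (inst : LexInstance N M) {i : N} {c : M} {X : Finset M}
    (hc : c ∈ inst.C i) (hcX : c ∈ X) : inst.SPref i (X.erase c) X := by
  right
  refine ⟨c, ?_, fun o ho _ => Finset.mem_of_mem_erase (Finset.mem_inter.1 ho).1⟩
  simp [Finset.mem_inter, Finset.mem_sdiff, hc, hcX]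

lemma imp_asymm (inst : LexInstance N M) {i : N} {a b : M}
    (h1 : inst.imp i a b) (h2 : inst.imp i b a) : False := by
  letI : LinearOrder M := inst.ord i
  change b < a at h1
  change a < b at h2
  exact absurd h2 (lt_asymm h1)

lemma spref_swap_good (inst : LexInstance N M) {i : N} {g g' : M} {X : Finset M}
    (hg : g ∈ inst.G i) (hgX : g ∉ X) (hg'X : g' ∈ X) (himp : inst.imp i g g') :
    inst.SPref i (insert g (X.erase g')) X := by
  left
  refine ⟨g, ?_, ?_⟩
  · simp [Finset.mem_inter, Finset.mem_sdiff, hg, hgX]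
  · intro o ho hio
    rcases Finset.mem_inter.1 ho with ⟨hoX, _⟩
    refine Finset.mem_insert_of_mem (Finset.mem_erase.2 ⟨?_, hoX⟩)
    rintro rfl
    exact inst.imp_asymm hio himp

lemma spref_swap_chore (inst : LexInstance N M) {i : N} {c c' : M} {X : Finset M}
    (hc : c ∈ inst.C i) (hcX : c ∈ X) (hc'X : c' ∉ X) (himp : inst.imp i c c') :
    inst.SPref i (insert c' (X.erase c)) X := by
  right
  have hne : c ≠ c' := by rintro rfl; exact hc'X hcX
  refine ⟨c, ?_, ?_⟩
  · simp [Finset.mem_inter, Finset.mem_sdiff, hc, hcX, hne]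
  · intro o ho hio
    rcases Finset.mem_inter.1 ho with ⟨hoX', _⟩
    rcases Finset.mem_insert.1 hoX' with rfl | h
    · exact absurd hio (fun h' => inst.imp_asymm h' himp)
    · exact Finset.mem_of_mem_erase h

lemma spref_insert_both (inst : LexInstance N M) {i : N} {o : M} {X Y : Finset M}
    (hX : o ∉ X) (hY : o ∉ Y) (h : inst.SPref i X Y) :
    inst.SPref i (insert o X) (insert o Y) := by
  rcases h with ⟨g, hg, hcond⟩ | ⟨c, hc, hcond⟩
  · left
    rcases Finset.mem_inter.1 hg with ⟨hgG, hgXY⟩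
    rcases Finset.mem_sdiff.1 hgXY with ⟨hgX, hgY⟩
    have hgo : g ≠ o := by rintro rfl; exact hX hgX
    refine ⟨g, ?_, ?_⟩
    · simp [Finset.mem_inter, Finset.mem_sdiff, hgG, hgX, hgY, hgo]
    · intro p hp hip
      rcases Finset.mem_inter.1 hp with ⟨hpY, hpG⟩
      rcases Finset.mem_insert.1 hpY with rfl | hpY'
      · exact Finset.mem_insert_self _ _
      · exact Finset.mem_insert_of_mem (hcond p (Finset.mem_inter.2 ⟨hpY', hpG⟩) hip)
  · right
    rcases Finset.mem_inter.1 hc with ⟨hcC, hcYX⟩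
    rcases Finset.mem_sdiff.1 hcYX with ⟨hcY, hcX⟩
    have hco : c ≠ o := by rintro rfl; exact hY hcY
    refine ⟨c, ?_, ?_⟩
    · simp [Finset.mem_inter, Finset.mem_sdiff, hcC, hcY, hcX, hco]
    · intro p hp hip
      rcases Finset.mem_inter.1 hp with ⟨hpX, hpC⟩
      rcases Finset.mem_insert.1 hpX with rfl | hpX'
      · exact Finset.mem_insert_self _ _
      · exact Finset.mem_insert_of_mem (hcond p (Finset.mem_inter.2 ⟨hpX', hpC⟩) hip)

lemma wpref_insert_both (inst : LexInstance N M) {i : N} {o : M} {X Y : Finset M}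
    (hX : o ∉ X) (hY : o ∉ Y) (h : inst.WPref i X Y) :
    inst.WPref i (insert o X) (insert o Y) := by
  rcases h with h | rfl
  · exact Or.inl (inst.spref_insert_both hX hY h)
  · exact Or.inr rfl

lemma pickOne_mem (inst : LexInstance N M) (i : N) {R : Finset M} (h : R.Nonempty) :
    inst.pickOne i R h ∈ R := by
  letI : LinearOrder M := inst.ord i
  unfold pickOne
  split
  · next hg => exact Finset.mem_of_mem_inter_left (Finset.max'_mem _ hg)
  · exact Finset.min'_mem R h

lemma pickOne_mem_good (inst : LexInstance N M) {i : N} {R : Finset M} (h : R.Nonempty)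
    (hg : (R ∩ inst.G i).Nonempty) : inst.pickOne i R h ∈ inst.G i := by
  letI : LinearOrder M := inst.ord i
  unfold pickOne
  rw [dif_pos hg]
  exact Finset.mem_of_mem_inter_right (Finset.max'_mem _ hg)

lemma pickOne_good_max (inst : LexInstance N M) {i : N} {R : Finset M} {o : M}
    (h : R.Nonempty) (hg : (R ∩ inst.G i).Nonempty)
    (ho : o ∈ R ∩ inst.G i) (hne : o ≠ inst.pickOne i R h) :
    inst.imp i (inst.pickOne i R h) o := by
  letI : LinearOrder M := inst.ord i
  have hpick : inst.pickOne i R h = (R ∩ inst.G i).max' hg := by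
    unfold pickOne; rw [dif_pos hg]
  rw [hpick] at hne ⊢
  exact lt_of_le_of_ne (Finset.le_max' _ o ho) hne

lemma pickOne_chore_min (inst : LexInstance N M) {i : N} {R : Finset M} {o : M}
    (h : R.Nonempty) (hg : R ∩ inst.G i = ∅)
    (ho : o ∈ R) (hne : o ≠ inst.pickOne i R h) :
    inst.imp i o (inst.pickOne i R h) := by
  letI : LinearOrder M := inst.ord i
  have hpick : inst.pickOne i R h = R.min' h := by
    unfold pickOne; rw [dif_neg (by simp [hg])]
  rw [hpick] at hne ⊢
  exact lt_of_le_of_ne (Finset.min'_le R o ho) (fun e => hne e.symm)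

lemma pickOne_chore (inst : LexInstance N M) {i : N} {R : Finset M} (h : R.Nonempty)
    (hg : R ∩ inst.G i = ∅) : inst.pickOne i R h ∈ inst.C i := by
  rw [C, Finset.mem_compl]
  intro hmem
  have : inst.pickOne i R h ∈ R ∩ inst.G i :=
    Finset.mem_inter.2 ⟨inst.pickOne_mem i h, hmem⟩
  rw [hg] at this
  exact absurd this (Finset.notMem_empty _)

/-- A partition of the finset `R` into bundles. -/
def PartOn (R : Finset M) (A : N → Finset M) : Prop :=
  (∀ i j, i ≠ j → Disjoint (A i) (A j)) ∧ ∀ o, (∃ i, o ∈ A i) ↔ o ∈ R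

/-- Pareto optimality relative to the remaining items `R`. -/
def POon (inst : LexInstance N M) (R : Finset M) (A : N → Finset M) : Prop :=
  ¬ ∃ B : N → Finset M, PartOn R B ∧ (∀ i, inst.WPref i (B i) (A i)) ∧
      ∃ h, inst.SPref h (B h) (A h)

lemma PartOn.subset {R : Finset M} {A : N → Finset M} (h : PartOn R A)
    {i : N} {o : M} (ho : o ∈ A i) : o ∈ R :=
  (h.2 o).1 ⟨i, ho⟩

lemma PartOn.eq_of_mem {R : Finset M} {A : N → Finset M} (h : PartOn R A)
    {i j : N} {o : M} (hi : o ∈ A i) (hj : o ∈ A j) : i = j := by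
  by_contra hne
  exact Finset.disjoint_left.1 (h.1 i j hne) hi hj

lemma cycle_improvement (inst : LexInstance N M) {R : Finset M} {A : N → Finset M}
    (hpart : PartOn R A) (S : N → Prop) (x : N → M) (w : N → N) (i₀ : N) (hS0 : S i₀)
    (hwS : ∀ i, S i → S (w i))
    (hown : ∀ i, S i → x i ∈ A (w i))
    (himp : ∀ i, S i →
      inst.SPref (w i) (insert (x (w i)) ((A (w i)).erase (x i))) (A (w i))) :
    ∃ B : N → Finset M, PartOn R B ∧ (∀ i, inst.WPref i (B i) (A i)) ∧
      ∃ h, inst.SPref h (B h) (A h) := by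
  classical
  set g : ℕ → N := fun n => w^[n] i₀ with hgdef
  have hgS : ∀ n, S (g n) := by
    intro n
    induction n with
    | zero => exact hS0
    | succ n ih =>
      show S (w^[n+1] i₀)
      rw [Function.iterate_succ_apply']
      exact hwS _ ih
  have hgsucc : ∀ n, g (n + 1) = w (g n) := fun n => Function.iterate_succ_apply' w n i₀
  -- pigeonhole: g is not injective
  obtain ⟨a₁, b₁, hne1, heq1⟩ := Finite.exists_ne_map_eq_of_infinite g
  have hPb : ∃ b, ∃ a, a < b ∧ g a = g b := by
    rcases lt_or_gt_of_ne hne1 with h | h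
    · exact ⟨b₁, a₁, h, heq1⟩
    · exact ⟨a₁, b₁, h, heq1.symm⟩
  set b₀ := Nat.find hPb with hb₀
  obtain ⟨a, ha, hgab⟩ := Nat.find_spec hPb
  set c := b₀ - a with hcdef
  have hc : 0 < c := by omega
  set q : ℕ → N := fun t => g (a + t) with hqdef
  have hqc : q c = q 0 := by
    show g (a + (b₀ - a)) = g (a + 0)
    have : a + (b₀ - a) = b₀ := by omega
    rw [this]
    simpa using hgab.symm
  have hqS : ∀ t, S (q t) := fun t => hgS _
  have qinj : ∀ s t, s < c → t < c → q s = q t → s = t := by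
    intro s t hs ht hqe
    by_contra hne
    rcases Nat.lt_or_ge s t with hlt | hge
    · have : a + t < b₀ := by omega
      exact absurd ⟨a + s, by omega, hqe⟩ (Nat.find_min hPb this)
    · have hlt : t < s := by omega
      have : a + s < b₀ := by omega
      exact absurd ⟨a + t, by omega, hqe.symm⟩ (Nat.find_min hPb this)
  set nxt : ℕ → ℕ := fun t => if t + 1 = c then 0 else t + 1 with hnxtdef
  set prv : ℕ → ℕ := fun t => if t = 0 then c - 1 else t - 1 with hprvdef
  have hnxt_lt : ∀ t, t < c → nxt t < c := by
    intro t ht; simp only [hnxtdef]; split <;> omega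
  have hprv_lt : ∀ t, t < c → prv t < c := by
    intro t ht; simp only [hprvdef]; split <;> omega
  have hnxt_prv : ∀ t, t < c → nxt (prv t) = t := by
    intro t ht; simp only [hnxtdef, hprvdef]; split <;> split <;> omega
  have hprv_nxt : ∀ t, t < c → prv (nxt t) = t := by
    intro t ht; simp only [hnxtdef, hprvdef]; split <;> split <;> omega
  have hq_nxt : ∀ t, t < c → q (nxt t) = w (q t) := by
    intro t ht
    by_cases h1 : t + 1 = c
    · have h0 : nxt t = 0 := by simp only [hnxtdef]; rw [if_pos h1]
      rw [h0, ← hqc, ← h1]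
      show g (a + (t + 1)) = w (g (a + t))
      rw [← Nat.add_assoc]
      exact hgsucc (a + t)
    · have h0 : nxt t = t + 1 := by simp only [hnxtdef]; rw [if_neg h1]
      rw [h0]
      show g (a + (t + 1)) = w (g (a + t))
      rw [← Nat.add_assoc]
      exact hgsucc (a + t)
  have hown' : ∀ t, t < c → x (q t) ∈ A (q (nxt t)) := by
    intro t ht
    rw [hq_nxt t ht]
    exact hown _ (hqS t)
  have yinj : ∀ s t, s < c → t < c → x (q s) = x (q t) → s = t := by
    intro s t hs ht he
    have h1 := hown' s hs
    have h2 := hown' t ht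
    rw [he] at h1
    have := hpart.eq_of_mem h1 h2
    have hnn := qinj _ _ (hnxt_lt s hs) (hnxt_lt t ht) this
    simp only [hnxtdef] at hnn
    split_ifs at hnn <;> omega
  -- the set of items that move, and the improved allocation B
  set P : Finset M := (Finset.range c).image (fun t => x (q t)) with hPdef
  set B : N → Finset M :=
    fun j => (A j \ P) ∪
      ((Finset.range c).filter (fun t => q t = j)).image (fun t => x (q t)) with hBdef
  have hmemB : ∀ j o, o ∈ B j ↔
      (o ∈ A j ∧ o ∉ P) ∨ ∃ t, t < c ∧ q t = j ∧ o = x (q t) := by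
    intro j o
    simp only [hBdef, Finset.mem_union, Finset.mem_sdiff, Finset.mem_image,
      Finset.mem_filter, Finset.mem_range]
    constructor
    · rintro (⟨h1, h2⟩ | ⟨t, ⟨ht, hqt⟩, he⟩)
      · exact Or.inl ⟨h1, h2⟩
      · exact Or.inr ⟨t, ht, hqt, he.symm⟩
    · rintro (⟨h1, h2⟩ | ⟨t, ht, hqt, he⟩)
      · exact Or.inl ⟨h1, h2⟩
      · exact Or.inr ⟨t, ⟨ht, hqt⟩, he.symm⟩
  have hmemP : ∀ o, o ∈ P ↔ ∃ t, t < c ∧ o = x (q t) := by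
    intro o
    simp only [hPdef, Finset.mem_image, Finset.mem_range]
    constructor
    · rintro ⟨t, ht, he⟩; exact ⟨t, ht, he.symm⟩
    · rintro ⟨t, ht, he⟩; exact ⟨t, ht, he.symm⟩
  have hAP : ∀ j s, s < c → x (q s) ∈ A j → j = q (nxt s) := by
    intro j s hs hmem
    exact hpart.eq_of_mem hmem (hown' s hs)
  -- B restricted to a cycle agent
  have hBcyc : ∀ s, s < c →
      B (q s) = insert (x (q s)) ((A (q s)).erase (x (q (prv s)))) := by
    intro s hs
    ext o
    rw [hmemB]
    simp only [Finset.mem_insert, Finset.mem_erase]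
    constructor
    · rintro (⟨h1, h2⟩ | ⟨t, ht, hqt, he⟩)
      · refine Or.inr ⟨?_, h1⟩
        rintro rfl
        exact h2 ((hmemP _).2 ⟨prv s, hprv_lt s hs, rfl⟩)
      · have : t = s := qinj t s ht hs hqt
        subst this
        exact Or.inl he
    · rintro (he | ⟨hne, hmem⟩)
      · exact Or.inr ⟨s, hs, rfl, he⟩
      · refine Or.inl ⟨hmem, ?_⟩
        intro hP
        rcases (hmemP o).1 hP with ⟨t, ht, rfl⟩
        have h1 : q s = q (nxt t) := hAP _ t ht hmem
        have h2 : s = nxt t := qinj s (nxt t) hs (hnxt_lt t ht) h1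
        have h3 : prv s = t := by rw [h2, hprv_nxt t ht]
        exact hne (by rw [h3])
  have hBfix : ∀ j, (¬ ∃ s, s < c ∧ q s = j) → B j = A j := by
    intro j hj
    ext o
    rw [hmemB]
    constructor
    · rintro (⟨h1, _⟩ | ⟨t, ht, hqt, he⟩)
      · exact h1
      · exact absurd ⟨t, ht, hqt⟩ hj
    · intro ho
      refine Or.inl ⟨ho, ?_⟩
      intro hP
      rcases (hmemP o).1 hP with ⟨t, ht, rfl⟩
      have := hAP j t ht ho
      exact hj ⟨nxt t, hnxt_lt t ht, this.symm⟩
  have hstrict : ∀ s, s < c → inst.SPref (q s) (B (q s)) (A (q s)) := by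
    intro s hs
    rw [hBcyc s hs]
    have h2 := himp (q (prv s)) (hqS (prv s))
    rw [← hq_nxt (prv s) (hprv_lt s hs), hnxt_prv s hs] at h2
    exact h2
  refine ⟨B, ⟨?_, ?_⟩, ?_, ⟨q 0, hstrict 0 hc⟩⟩
  · -- disjointness
    intro i j hij
    rw [Finset.disjoint_left]
    intro o hoi hoj
    rcases (hmemB i o).1 hoi with ⟨h1, h2⟩ | ⟨s, hs, hqs, rfl⟩
    · rcases (hmemB j o).1 hoj with ⟨h1', _⟩ | ⟨t, ht, hqt, rfl⟩
      · exact hij (hpart.eq_of_mem h1 h1')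
      · exact h2 ((hmemP _).2 ⟨t, ht, rfl⟩)
    · rcases (hmemB j _).1 hoj with ⟨_, h2'⟩ | ⟨t, ht, hqt, he⟩
      · exact h2' ((hmemP _).2 ⟨s, hs, rfl⟩)
      · have : s = t := yinj s t hs ht he
        subst this
        exact hij (hqs ▸ hqt ▸ rfl)
  · -- coverage
    intro o
    constructor
    · rintro ⟨j, hoj⟩
      rcases (hmemB j o).1 hoj with ⟨h1, _⟩ | ⟨t, ht, _, rfl⟩
      · exact hpart.subset h1
      · exact hpart.subset (hown' t ht)
    · intro hoR
      by_cases hP : o ∈ P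
      · rcases (hmemP o).1 hP with ⟨t, ht, rfl⟩
        exact ⟨q t, (hmemB _ _).2 (Or.inr ⟨t, ht, rfl, rfl⟩)⟩
      · obtain ⟨j, hoj⟩ := (hpart.2 o).2 hoR
        exact ⟨j, (hmemB j o).2 (Or.inl ⟨hoj, hP⟩)⟩
  · -- preferences
    intro j
    by_cases hcyc : ∃ s, s < c ∧ q s = j
    · obtain ⟨s, hs, rfl⟩ := hcyc
      exact Or.inl (hstrict s hs)
    · rw [hBfix j hcyc]
      exact inst.wpref_refl j (A j)

lemma exists_pick (inst : LexInstance N M) {R : Finset M} {A : N → Finset M}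
    (hR : R.Nonempty) (hpart : PartOn R A) (hPO : inst.POon R A) :
    ∃ i, inst.pickOne i R hR ∈ A i := by
  classical
  by_contra hno
  push_neg at hno
  obtain ⟨o₀, ho₀⟩ := id hR
  obtain ⟨j₀, hj₀⟩ := (hpart.2 o₀).2 ho₀
  -- owner function
  have hωex : ∀ o : M, o ∈ R → ∃ j, o ∈ A j := fun o ho => (hpart.2 o).2 ho
  set ω : M → N := fun o => if h : ∃ j, o ∈ A j then h.choose else j₀ with hωdef
  have hω : ∀ o, o ∈ R → o ∈ A (ω o) := by
    intro o ho
    obtain ⟨j, hj⟩ := hωex o ho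
    simp only [hωdef]
    rw [dif_pos ⟨j, hj⟩]
    exact (Exists.choose_spec (⟨j, hj⟩ : ∃ j, o ∈ A j))
  set x : N → M := fun i => inst.pickOne i R hR with hxdef
  have hxR : ∀ i, x i ∈ R := fun i => inst.pickOne_mem i hR
  have hxA : ∀ i, x i ∉ A i := hno
  set w : N → N := fun i => ω (x i) with hwdef
  have hwA : ∀ i, x i ∈ A (w i) := fun i => hω (x i) (hxR i)
  by_cases hgood : ∃ i, (R ∩ inst.G i).Nonempty
  · by_cases hchore : ∃ i, (R ∩ inst.G i).Nonempty ∧ x i ∈ inst.C (w i)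
    · -- two-agent improvement: w i gives i's top good (a chore for w i) to i
      obtain ⟨i, hSi, hcw⟩ := hchore
      have hij : i ≠ w i := by
        intro h
        have h2 := hwA i
        rw [← h] at h2
        exact hxA i h2
      set B : N → Finset M := fun k => if k = i then insert (x i) (A i)
        else (A k).erase (x i) with hBdef
      have hBi : B i = insert (x i) (A i) := by simp only [hBdef, if_pos rfl]
      have hBne : ∀ k, k ≠ i → B k = (A k).erase (x i) := by
        intro k hk; simp only [hBdef, if_neg hk]
      refine hPO ⟨B, ⟨?_, ?_⟩, ?_, ⟨i, ?_⟩⟩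
      · intro k l hkl
        rw [Finset.disjoint_left]
        intro o hok hol
        by_cases hk : k = i <;> by_cases hl : l = i
        · exact hkl (hk.trans hl.symm)
        · rw [hk, hBi] at hok
          rw [hBne l hl] at hol
          rcases Finset.mem_insert.1 hok with rfl | hok'
          · exact (Finset.mem_erase.1 hol).1 rfl
          · refine Finset.disjoint_left.1 (hpart.1 i l (fun h => hl h.symm)) hok'
              (Finset.mem_of_mem_erase hol)
        · rw [hl, hBi] at hol
          rw [hBne k hk] at hok
          rcases Finset.mem_insert.1 hol with he | hol'
          · exact (Finset.mem_erase.1 hok).1 he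
          · exact Finset.disjoint_left.1 (hpart.1 k i hk) (Finset.mem_of_mem_erase hok) hol'
        · rw [hBne k hk] at hok
          rw [hBne l hl] at hol
          exact Finset.disjoint_left.1 (hpart.1 k l hkl) (Finset.mem_of_mem_erase hok)
            (Finset.mem_of_mem_erase hol)
      · intro o
        constructor
        · rintro ⟨k, hok⟩
          by_cases hk : k = i
          · rw [hk, hBi] at hok
            rcases Finset.mem_insert.1 hok with rfl | hok'
            · exact hxR i
            · exact hpart.subset hok'
          · rw [hBne k hk] at hok
            exact hpart.subset (Finset.mem_of_mem_erase hok)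
        · intro hoR
          by_cases ho : o = x i
          · exact ⟨i, by rw [hBi, ho]; exact Finset.mem_insert_self _ _⟩
          · obtain ⟨k, hok⟩ := (hpart.2 o).2 hoR
            by_cases hk : k = i
            · exact ⟨i, by rw [hBi]; exact Finset.mem_insert_of_mem (hk ▸ hok)⟩
            · exact ⟨k, by rw [hBne k hk]; exact Finset.mem_erase.2 ⟨ho, hok⟩⟩
      · intro k
        by_cases hk : k = i
        · rw [hk, hBi]
          exact Or.inl (inst.spref_insert_good (inst.pickOne_mem_good hR hSi) (hxA i))
        · rw [hBne k hk]
          by_cases hkj : k = w i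
          · rw [hkj]
            exact Or.inl (inst.spref_erase_chore hcw (hwA i))
          · have hxk : x i ∉ A k := by
              intro hmem
              exact hkj (hpart.eq_of_mem hmem (hwA i))
            rw [Finset.erase_eq_of_notMem hxk]
            exact inst.wpref_refl k (A k)
      · rw [hBi]
        exact inst.spref_insert_good (inst.pickOne_mem_good hR hSi) (hxA i)
    · -- every top good is a good for its owner: cycle improvement
      push_neg at hchore
      obtain ⟨i₀, hSi₀⟩ := hgood
      have hGw : ∀ i, (R ∩ inst.G i).Nonempty → x i ∈ inst.G (w i) := by
        intro i hSi
        have := hchore i hSi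
        rw [C, Finset.mem_compl, not_not] at this
        exact this
      have := inst.cycle_improvement hpart (fun i => (R ∩ inst.G i).Nonempty) x w i₀ hSi₀
        (fun i hSi => ⟨x i, Finset.mem_inter.2 ⟨hxR i, hGw i hSi⟩⟩)
        (fun i hSi => hwA i)
        (fun i hSi => by
          have hSw : (R ∩ inst.G (w i)).Nonempty := ⟨x i, Finset.mem_inter.2 ⟨hxR i, hGw i hSi⟩⟩
          refine inst.spref_swap_good (inst.pickOne_mem_good hR hSw) (hxA (w i)) (hwA i) ?_
          refine inst.pickOne_good_max hR hSw (Finset.mem_inter.2 ⟨hxR i, hGw i hSi⟩) ?_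
          intro he
          apply hxA (w i)
          show inst.pickOne (w i) R hR ∈ A (w i)
          rw [← he]
          exact hwA i)
      exact hPO this
  · -- no goods remain for anybody: chore cycle improvement
    push_neg at hgood
    have hgood' : ∀ i, R ∩ inst.G i = ∅ := by
      intro i
      exact hgood i
    have := inst.cycle_improvement hpart (fun _ => True) x w j₀ trivial
      (fun i _ => trivial)
      (fun i _ => hwA i)
      (fun i _ => by
        have hcx : x i ∈ inst.C (w i) := by
          rw [C, Finset.mem_compl]
          intro hmem
          have : x i ∈ R ∩ inst.G (w i) := Finset.mem_inter.2 ⟨hxR i, hmem⟩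
          rw [hgood' (w i)] at this
          exact absurd this (Finset.notMem_empty _)
        refine inst.spref_swap_chore hcx (hwA i) (hxA (w i)) ?_
        refine inst.pickOne_chore_min hR (hgood' (w i)) (hxR i) ?_
        intro he
        apply hxA (w i)
        show inst.pickOne (w i) R hR ∈ A (w i)
        rw [← he]
        exact hwA i)
    exact hPO this

lemma POon_erase (inst : LexInstance N M) {R : Finset M} {A : N → Finset M} {i : N} {o : M}
    (hpart : PartOn R A) (hoi : o ∈ A i) (hPO : inst.POon R A) :
    inst.POon (R.erase o) (fun j => (A j).erase o) := by
  rintro ⟨B', hpart', hW', ⟨h, hS'⟩⟩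
  have hB'o : ∀ j, o ∉ B' j := by
    intro j hmem
    exact (Finset.mem_erase.1 (hpart'.subset hmem)).1 rfl
  have hA'o : ∀ j, o ∉ (A j).erase o := fun j => Finset.notMem_erase o (A j)
  have hAo : ∀ j, j ≠ i → o ∉ A j := by
    intro j hj hmem
    exact hj (hpart.eq_of_mem hmem hoi)
  set B : N → Finset M := fun j => if j = i then insert o (B' j) else B' j with hBdef
  have hBmem : ∀ j p, p ∈ B j ↔ (p ∈ B' j ∨ (j = i ∧ p = o)) := by
    intro j p
    by_cases hj : j = i
    · subst hj
      simp only [hBdef, if_pos rfl, Finset.mem_insert]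
      tauto
    · simp only [hBdef, if_neg hj]
      tauto
  refine hPO ⟨B, ⟨?_, ?_⟩, ?_, ⟨h, ?_⟩⟩
  · intro k l hkl
    rw [Finset.disjoint_left]
    intro p hpk hpl
    rcases (hBmem k p).1 hpk with hk' | ⟨hki, hpo⟩
    · rcases (hBmem l p).1 hpl with hl' | ⟨hli, hpo⟩
      · exact Finset.disjoint_left.1 (hpart'.1 k l hkl) hk' hl'
      · exact hB'o k (hpo ▸ hk')
    · rcases (hBmem l p).1 hpl with hl' | ⟨hli, _⟩
      · exact hB'o l (hpo ▸ hl')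
      · exact hkl (hki.trans hli.symm)
  · intro p
    constructor
    · rintro ⟨k, hpk⟩
      rcases (hBmem k p).1 hpk with hk' | ⟨hki, hpo⟩
      · exact Finset.mem_of_mem_erase (hpart'.subset hk')
      · rw [hpo]
        exact hpart.subset hoi
    · intro hpR
      by_cases hp : p = o
      · exact ⟨i, (hBmem i p).2 (Or.inr ⟨rfl, hp⟩)⟩
      · obtain ⟨k, hk⟩ := (hpart'.2 p).2 (Finset.mem_erase.2 ⟨hp, hpR⟩)
        exact ⟨k, (hBmem k p).2 (Or.inl hk)⟩
  · intro j
    by_cases hj : j = i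
    · subst hj
      have hB : B j = insert o (B' j) := by simp only [hBdef, if_pos rfl]
      have hAins : A j = insert o ((A j).erase o) := (Finset.insert_erase hoi).symm
      rw [hB, hAins]
      exact inst.wpref_insert_both (hB'o j) (hA'o j) (hW' j)
    · have hB : B j = B' j := by simp only [hBdef, if_neg hj]
      have hAe : (A j).erase o = A j := Finset.erase_eq_of_notMem (hAo j hj)
      rw [hB, ← hAe]
      exact hW' j
  · by_cases hh : h = i
    · subst hh
      have hB : B h = insert o (B' h) := by simp only [hBdef, if_pos rfl]
      have hAins : A h = insert o ((A h).erase o) := (Finset.insert_erase hoi).symm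
      rw [hB, hAins]
      exact inst.spref_insert_both (hB'o h) (hA'o h) hS'
    · have hB : B h = B' h := by simp only [hBdef, if_neg hh]
      have hAe : (A h).erase o = A h := Finset.erase_eq_of_notMem (hAo h hh)
      rw [hB, ← hAe]
      exact hS'

lemma seq_of_POon (inst : LexInstance N M) :
    ∀ (n : ℕ) (R : Finset M) (A : N → Finset M), R.card = n → PartOn R A →
      inst.POon R A → ∃ s : List N, s.length = n ∧ inst.runPick s R = A := by
  intro n
  induction n with
  | zero =>
    intro R A hcard hpart _
    have hR : R = ∅ := Finset.card_eq_zero.1 hcard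
    refine ⟨[], rfl, ?_⟩
    funext j
    rw [runPick]
    ext o
    simp only [Finset.notMem_empty, false_iff]
    intro ho
    have := hpart.subset ho
    rw [hR] at this
    exact absurd this (Finset.notMem_empty o)
  | succ n ih =>
    intro R A hcard hpart hPO
    have hR : R.Nonempty := by
      rw [← Finset.card_pos, hcard]
      omega
    obtain ⟨i, hio⟩ := inst.exists_pick hR hpart hPO
    set o := inst.pickOne i R hR with hodef
    have hoR : o ∈ R := inst.pickOne_mem i hR
    have hpart' : PartOn (R.erase o) (fun j => (A j).erase o) := by
      constructor
      · intro k l hkl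
        exact Finset.disjoint_of_subset_left (Finset.erase_subset o (A k))
          (Finset.disjoint_of_subset_right (Finset.erase_subset o (A l)) (hpart.1 k l hkl))
      · intro p
        constructor
        · rintro ⟨k, hk⟩
          rcases Finset.mem_erase.1 hk with ⟨hne, hmem⟩
          exact Finset.mem_erase.2 ⟨hne, hpart.subset hmem⟩
        · intro hp
          rcases Finset.mem_erase.1 hp with ⟨hne, hmem⟩
          obtain ⟨k, hk⟩ := (hpart.2 p).2 hmem
          exact ⟨k, Finset.mem_erase.2 ⟨hne, hk⟩⟩
    have hPO' := inst.POon_erase hpart hio hPO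
    have hcard' : (R.erase o).card = n := by
      rw [Finset.card_erase_of_mem hoR, hcard]
      omega
    obtain ⟨s', hlen, hrun⟩ := ih (R.erase o) (fun j => (A j).erase o) hcard' hpart' hPO'
    refine ⟨i :: s', by simp [hlen], ?_⟩
    funext j
    rw [runPick, dif_pos hR]
    show inst.runPick s' (R.erase o) j ∪ (if j = i then {o} else ∅) = A j
    simp only [hrun]
    by_cases hj : j = i
    · rw [if_pos hj, hj]
      ext p
      simp only [Finset.mem_union, Finset.mem_erase, Finset.mem_singleton]
      constructor
      · rintro (⟨_, hp⟩ | rfl)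
        · exact hp
        · exact hio
      · intro hp
        by_cases hpo : p = o
        · exact Or.inr hpo
        · exact Or.inl ⟨hpo, hp⟩
    · rw [if_neg hj, Finset.union_empty]
      exact Finset.erase_eq_of_notMem (fun hmem => hj (hpart.eq_of_mem hmem hio))

end LexInstance

/-- In any lexicographic mixed instance, every Pareto optimal
complete allocation is sequencible. -/
theorem po_implies_sequencible
    {N M : Type} [Fintype N] [Fintype M] [DecidableEq M]
    (inst : LexInstance N M)
    (A : N → Finset M) (hA : inst.IsAllocation A) (hPO : inst.ParetoOptimal A) :
    inst.Sequencible A := by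
  have hpart : LexInstance.PartOn (Finset.univ : Finset M) A := by
    refine ⟨hA.1, fun o => ?_⟩
    simp only [Finset.mem_univ, iff_true]
    exact hA.2 o
  have hPO' : inst.POon (Finset.univ : Finset M) A := by
    rintro ⟨B, hpartB, hW, hS⟩
    refine hPO ⟨B, ⟨hpartB.1, fun o => (hpartB.2 o).2 (Finset.mem_univ o)⟩, hW, hS⟩
  obtain ⟨s, hlen, hrun⟩ := inst.seq_of_POon (Fintype.card M) Finset.univ A
    (Finset.card_univ) hpart hPO'
  exact ⟨s, hlen, hrun⟩
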